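/- Let E/F be a ramified quadratic field extension and ϖ_E a uniformizer of 𝒪. Then for all r, n ∈ ℕ: (i) 𝒪_r^{(n)} = ∅ if n > 2r+1, or if 0 ≤ n ≤ 2r and n is odd; (ii) 𝒪_r^{(0)} = 𝒪_r^×; (iii) 𝒪_r^{(n)} = ϖ^{n/2}·(𝒪_{r−n/2}^× ∖ 𝒪_{r−n/2+1}^×) if n is even and 0 < n ≤ 2r; (iv) 𝒪_r^{(2r+1)} = ϖ_E^{2r+1}𝒪^×. -/

import Mathlib

/-! Setup as in the paper: `F` nonarchimedean local field with ring of integers `𝔬`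
(a DVR `o`) and uniformizer `ϖ`; `E/F` a quadratic field extension with ring of
integers `𝒪` (a DVR `O`), inclusion `f : 𝔬 → 𝒪`; `β ∈ 𝒪 ∖ 𝔬` with `𝒪 = 𝔬 + β𝔬` and
`Nr(β) ∈ 𝔬^×`, the norm `Nr` pinned down by the involutive conjugation `σ` via
`f (Nr z) = z · σ z`.  `𝒪_r = 𝔬 + ϖ^rβ𝔬`,
`𝒪_r^{(n)} = {t ∈ 𝒪_r ∖ ϖ𝒪_r : Nr(t) ∈ ϖⁿ𝔬^×}`.  Ramification of `E/F` is expressed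
by `f ϖ` being associated to `ϖ_E²` for a uniformizer `ϖ_E` of `𝒪`. -/

/-- The order `𝒪_r = 𝔬 + ϖ^rβ𝔬` of conductor `r`. -/
def ordSet {o O : Type*} [CommRing o] [CommRing O] (f : o →+* O) (ϖ : o) (β : O)
    (r : ℕ) : Set O :=
  {z | ∃ x y : o, z = f x + f (ϖ ^ r * y) * β}

/-- The unit group `𝒪_r^×` of the order `𝒪_r` (as a subset of `𝒪`). -/
def ordUnits {o O : Type*} [CommRing o] [CommRing O] (f : o →+* O) (ϖ : o) (β : O)
    (r : ℕ) : Set O :=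
  {z | z ∈ ordSet f ϖ β r ∧ ∃ w ∈ ordSet f ϖ β r, z * w = 1}

/-- The set `𝒪_r^{(n)} = {t ∈ 𝒪_r ∖ ϖ𝒪_r : Nr(t) ∈ ϖⁿ𝔬^×}`. -/
def ordLayer {o O : Type*} [CommRing o] [CommRing O] (f : o →+* O) (ϖ : o) (β : O)
    (Nr : O →* o) (r n : ℕ) : Set O :=
  {z | z ∈ ordSet f ϖ β r ∧ (¬ ∃ s ∈ ordSet f ϖ β r, z = f ϖ * s) ∧
    ∃ u : oˣ, Nr z = ϖ ^ n * u}

set_option linter.unusedVariables false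
set_option linter.unusedSectionVars false

section
namespace Stmt4Aux

variable {o O : Type*} [CommRing o] [IsDomain o] [IsDiscreteValuationRing o]
    [CommRing O] [IsDomain O] [IsDiscreteValuationRing O]

/-- `z` has valuation exactly `k` (w.r.t. uniformizer `ϖE`). -/
def Vp (ϖE : O) (k : ℕ) (z : O) : Prop := ∃ u : O, IsUnit u ∧ z = ϖE ^ k * u

theorem vp_unique {ϖE : O} (hϖE : Irreducible ϖE) {j k : ℕ} {z : O}
    (hj : Vp ϖE j z) (hk : Vp ϖE k z) : j = k := by
  obtain ⟨u, hu, rfl⟩ := hj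
  obtain ⟨v, hv, hvz⟩ := hk
  obtain ⟨U, rfl⟩ := hu
  obtain ⟨V, rfl⟩ := hv
  exact IsDiscreteValuationRing.unit_mul_pow_congr_pow hϖE hϖE U V j k
    (by rw [mul_comm]; rw [mul_comm (ϖE ^ k)] at hvz; exact hvz)

theorem vp_mul {ϖE : O} {j k : ℕ} {a b : O} (ha : Vp ϖE j a) (hb : Vp ϖE k b) :
    Vp ϖE (j + k) (a * b) := by
  obtain ⟨u, hu, rfl⟩ := ha
  obtain ⟨v, hv, rfl⟩ := hb
  exact ⟨u * v, hu.mul hv, by ring⟩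

theorem nonunit_add_nonunit {R : Type*} [CommRing R] [IsLocalRing R] {a b : R}
    (ha : ¬IsUnit a) (hb : ¬IsUnit b) : ¬IsUnit (a + b) :=
  mem_nonunits_iff.mp
    (IsLocalRing.nonunits_add (mem_nonunits_iff.mpr ha) (mem_nonunits_iff.mpr hb))

theorem unit_add_nonunit {R : Type*} [CommRing R] [IsLocalRing R] {a b : R}
    (ha : IsUnit a) (hb : ¬IsUnit b) : IsUnit (a + b) := by
  by_contra h
  have hnb : ¬IsUnit (-b) := fun hh => hb (by simpa using hh.neg)
  have := nonunit_add_nonunit h hnb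
  rw [show a + b + -b = a by ring] at this
  exact this ha

theorem vp_add {ϖE : O} (hϖE : Irreducible ϖE) {j k : ℕ} {a b : O}
    (ha : Vp ϖE j a) (hb : Vp ϖE k b) (hjk : j < k) : Vp ϖE j (a + b) := by
  obtain ⟨u, hu, rfl⟩ := ha
  obtain ⟨v, hv, rfl⟩ := hb
  refine ⟨u + ϖE ^ (k - j) * v, unit_add_nonunit hu ?_, ?_⟩
  · intro h
    have h1 : IsUnit (ϖE ^ (k - j) * v * ↑hv.unit⁻¹) := h.mul hv.unit⁻¹.isUnit
    rw [mul_assoc, IsUnit.mul_val_inv, mul_one] at h1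
    have : IsUnit ϖE := by
      have hkj : k - j ≠ 0 := by omega
      exact isUnit_of_dvd_unit (dvd_pow_self ϖE hkj) h1
    exact hϖE.not_isUnit this
  · rw [mul_add, ← mul_assoc, ← pow_add]
    congr 3
    omega
section WithMaps

variable (f : o →+* O) (ϖ : o) (ϖE π : O)

theorem decomp (hϖ : Irreducible ϖ) (x : o) :
    x = 0 ∨ ∃ l u, IsUnit u ∧ x = ϖ ^ l * u := by
  rcases eq_or_ne x 0 with h | h
  · exact Or.inl h
  · obtain ⟨l, U, hU⟩ := IsDiscreteValuationRing.eq_unit_mul_pow_irreducible h hϖ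
    exact Or.inr ⟨l, U, U.isUnit, by rw [hU, mul_comm]⟩

theorem dvd_of_not_isUnit (hϖ : Irreducible ϖ) {x : o} (hx : ¬IsUnit x) : ϖ ∣ x := by
  rcases decomp ϖ hϖ x with rfl | ⟨l, u, hu, rfl⟩
  · exact dvd_zero ϖ
  · rcases Nat.eq_zero_or_pos l with rfl | hl
    · exact absurd (by simpa using hu) hx
    · exact Dvd.dvd.mul_right (dvd_pow_self ϖ (by omega)) u

theorem not_dvd_unit (hϖ : Irreducible ϖ) {x : o} (hx : IsUnit x) : ¬ ϖ ∣ x := fun h =>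
  hϖ.not_isUnit (isUnit_of_dvd_unit h hx)

theorem f_nonunit (hϖE : Irreducible ϖE)
    (hram : ∃ w : O, IsUnit w ∧ ϖE ^ 2 = f ϖ * w) : ¬IsUnit (f ϖ) := by
  obtain ⟨w, hw, hw2⟩ := hram
  intro h
  have : IsUnit (ϖE ^ 2) := hw2 ▸ h.mul hw
  exact hϖE.not_isUnit (isUnit_of_dvd_unit (dvd_pow_self ϖE two_ne_zero) this)

theorem isUnit_f_iff (hϖ : Irreducible ϖ) (hϖE : Irreducible ϖE)
    (hram : ∃ w : O, IsUnit w ∧ ϖE ^ 2 = f ϖ * w) {x : o} :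
    IsUnit (f x) ↔ IsUnit x := by
  constructor
  · intro h
    by_contra hx
    rcases decomp ϖ hϖ x with rfl | ⟨l, u, hu, rfl⟩
    · rw [map_zero] at h
      exact not_isUnit_zero h
    · rcases Nat.eq_zero_or_pos l with rfl | hl
      · exact hx (by simpa using hu)
      · rw [map_mul, map_pow] at h
        have : IsUnit (f ϖ) := isUnit_of_dvd_unit
          (dvd_mul_of_dvd_left (dvd_pow_self (f ϖ) (by omega)) _) h
        exact f_nonunit f ϖ ϖE hϖE hram this
  · exact fun h => h.map f

theorem vp_f (hram : ∃ w : O, IsUnit w ∧ ϖE ^ 2 = f ϖ * w)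
    {u : o} (hu : IsUnit u) (l : ℕ) : Vp ϖE (2 * l) (f (ϖ ^ l * u)) := by
  obtain ⟨w, hw, hw2⟩ := hram
  obtain ⟨wi, hwi⟩ := hw.exists_right_inv
  have hfϖ : f ϖ = ϖE ^ 2 * wi := by
    rw [hw2, mul_assoc, hwi, mul_one]
  have hwiu : IsUnit wi := IsUnit.of_mul_eq_one (a := wi) w (by rwa [mul_comm] at hwi)
  refine ⟨wi ^ l * f u, (hwiu.pow l).mul (hu.map f), ?_⟩
  rw [map_mul, map_pow, hfϖ, mul_pow, ← pow_mul, mul_comm 2 l, mul_comm l 2]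
  ring

theorem vp_term (hram : ∃ w : O, IsUnit w ∧ ϖE ^ 2 = f ϖ * w)
    (hπ : ∃ e : O, IsUnit e ∧ π = ϖE * e)
    {w : o} (hw : IsUnit w) (k : ℕ) : Vp ϖE (2 * k + 1) (f (ϖ ^ k * w) * π) := by
  obtain ⟨e, he, rfl⟩ := hπ
  have h1 := vp_f f ϖ ϖE hram hw k
  obtain ⟨u, hu, hu2⟩ := h1
  refine ⟨u * e, hu.mul he, ?_⟩
  rw [hu2, pow_succ]
  ring

theorem pi_nonunit (hϖE : Irreducible ϖE) (hπ : ∃ e : O, IsUnit e ∧ π = ϖE * e) :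
    ¬IsUnit π := by
  obtain ⟨e, he, rfl⟩ := hπ
  intro h
  exact hϖE.not_isUnit (isUnit_of_mul_isUnit_left h)

theorem pi_ne_zero (hϖE : Irreducible ϖE) (hπ : ∃ e : O, IsUnit e ∧ π = ϖE * e) :
    π ≠ 0 := by
  obtain ⟨e, he, rfl⟩ := hπ
  exact mul_ne_zero hϖE.ne_zero he.ne_zero

/-- uniqueness of π-coordinates -/
theorem uniq (hf : Function.Injective f) (hϖ : Irreducible ϖ) (hϖE : Irreducible ϖE)
    (hram : ∃ w : O, IsUnit w ∧ ϖE ^ 2 = f ϖ * w)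
    (hπ : ∃ e : O, IsUnit e ∧ π = ϖE * e)
    {s y s' y' : o} (h : f s + f y * π = f s' + f y' * π) : s = s' ∧ y = y' := by
  have key : f (s - s') = f (y' - y) * π := by
    rw [map_sub, map_sub]
    linear_combination h
  have hy : y = y' := by
    by_contra hne
    have hy0 : y' - y ≠ 0 := sub_ne_zero.mpr (Ne.symm hne)
    rcases decomp ϖ hϖ (y' - y) with h0 | ⟨k, v, hv, hd⟩
    · exact hy0 h0
    have hrhs : Vp ϖE (2 * k + 1) (f (y' - y) * π) := hd ▸ vp_term f ϖ ϖE π hram hπ hv k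
    have hne0 : f (s - s') ≠ 0 := by
      rw [key]
      exact mul_ne_zero (fun hh => hy0 (hf (by rw [hh, map_zero])))
        (pi_ne_zero ϖE π hϖE hπ)
    have hs0 : s - s' ≠ 0 := fun hh => hne0 (by rw [hh, map_zero])
    rcases decomp ϖ hϖ (s - s') with h0 | ⟨l, v', hv', hd'⟩
    · exact hs0 h0
    have hlhs : Vp ϖE (2 * l) (f (s - s')) := hd' ▸ vp_f f ϖ ϖE hram hv' l
    have := vp_unique hϖE hlhs (key ▸ hrhs)
    omega
  refine ⟨?_, hy⟩
  subst hy
  have : f (s - s') = 0 := by rw [key, sub_self, map_zero, zero_mul]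
  have h2 := hf (by rw [this, map_zero] : f (s - s') = f 0)
  exact sub_eq_zero.mp h2

end WithMaps

section Sigma

variable (f : o →+* O) (ϖ : o) (ϖE π : O) (σ : O →+* O)

theorem isUnit_sigma (hσσ : ∀ z : O, σ (σ z) = z) {a : O} (h : IsUnit (σ a)) : IsUnit a := by
  obtain ⟨t, ht⟩ := isUnit_iff_exists_inv.mp h
  refine isUnit_iff_exists_inv.mpr ⟨σ t, ?_⟩
  have := congrArg σ ht
  rw [map_mul, hσσ, map_one] at this
  exact this

theorem vp_sigma (hϖE : Irreducible ϖE) (hσσ : ∀ z : O, σ (σ z) = z)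
    {k : ℕ} {z : O} (h : Vp ϖE k z) : Vp ϖE k (σ z) := by
  have hirr : Irreducible (σ ϖE) := by
    constructor
    · intro hu
      exact hϖE.not_isUnit (isUnit_sigma σ hσσ hu)
    · intro a b hab
      have : ϖE = σ a * σ b := by rw [← map_mul, ← hab, hσσ]
      rcases hϖE.isUnit_or_isUnit this with h1 | h1
      · exact Or.inl (isUnit_sigma σ hσσ h1)
      · exact Or.inr (isUnit_sigma σ hσσ h1)
  obtain ⟨U, hU⟩ := IsDiscreteValuationRing.associated_of_irreducible O hirr hϖE
  obtain ⟨u, hu, rfl⟩ := h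
  refine ⟨(↑U⁻¹ : O) ^ k * σ u, (U⁻¹.isUnit.pow k).mul (isUnit_sigma σ hσσ (by rwa [hσσ])), ?_⟩
  have hσϖE : σ ϖE = ϖE * ↑U⁻¹ := (Units.eq_mul_inv_iff_mul_eq U).mpr hU
  rw [map_mul, map_pow, hσϖE, mul_pow]
  ring

end Sigma


section Main

variable {f : o →+* O} {ϖ : o} {β ϖE π : O} {b : o} {σ : O →+* O} {Nr : O →* o}
variable (hf : Function.Injective f) (hϖ : Irreducible ϖ) (hϖE : Irreducible ϖE)
variable (hram : ∃ w : O, IsUnit w ∧ ϖE ^ 2 = f ϖ * w)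
variable (hπ : ∃ e : O, IsUnit e ∧ π = ϖE * e)
variable (hb : β = f b + π)
variable (hσσ : ∀ z : O, σ (σ z) = z)
variable (hNr : ∀ z : O, f (Nr z) = z * σ z)

include hb in
theorem mem_ordSet_iff {j : ℕ} {z : O} :
    z ∈ ordSet f ϖ β j ↔ ∃ s y : o, z = f s + f (ϖ ^ j * y) * π := by
  constructor
  · rintro ⟨x, y, rfl⟩
    exact ⟨x + ϖ ^ j * y * b, y, by
      rw [hb]; simp only [map_add, map_mul, map_pow]; ring⟩
  · rintro ⟨s, y, rfl⟩
    exact ⟨s - ϖ ^ j * y * b, y, by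
      rw [hb]; simp only [map_add, map_mul, map_pow, map_sub]; ring⟩

include hf hϖ hϖE hram hπ hb in
theorem fdvd_iff {j : ℕ} {s y : o} :
    (∃ t ∈ ordSet f ϖ β j, f s + f (ϖ ^ j * y) * π = f ϖ * t) ↔ ϖ ∣ s ∧ ϖ ∣ y := by
  constructor
  · rintro ⟨t, ht, heq⟩
    obtain ⟨a, c, rfl⟩ := (mem_ordSet_iff hb).mp ht
    rw [mul_add, ← map_mul, ← mul_assoc, ← map_mul] at heq
    obtain ⟨h1, h2⟩ := uniq f ϖ ϖE π hf hϖ hϖE hram hπ heq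
    refine ⟨⟨a, h1⟩, ⟨c, ?_⟩⟩
    have h3 : ϖ ^ j * y = ϖ ^ j * (ϖ * c) := by rw [h2]; ring
    exact mul_left_cancel₀ (pow_ne_zero j hϖ.ne_zero) h3
  · rintro ⟨⟨a, rfl⟩, ⟨c, rfl⟩⟩
    refine ⟨f a + f (ϖ ^ j * c) * π, (mem_ordSet_iff hb).mpr ⟨a, c, rfl⟩, ?_⟩
    simp only [map_mul]
    ring

include hram hπ hb in
theorem pisq (hgen : ∀ z : O, ∃ x y : o, z = f x + f y * β) :
    ∃ a c : o, π ^ 2 = f (ϖ * a) + f (ϖ * c) * π := by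
  obtain ⟨w, hw, hw2⟩ := hram
  obtain ⟨e, he, rfl⟩ := hπ
  have h1 : (ϖE * e) ^ 2 = f ϖ * (w * e ^ 2) := by rw [mul_pow, hw2]; ring
  obtain ⟨x, y, hxy⟩ := hgen (w * e ^ 2)
  refine ⟨x + y * b, y, ?_⟩
  rw [h1, hxy, hb]
  simp only [map_add, map_mul]
  ring

include hϖ hϖE hram hπ in
theorem isUnit_scoord {j : ℕ} {s y : o} :
    IsUnit (f s + f (ϖ ^ j * y) * π) ↔ IsUnit s := by
  have hπn : ¬IsUnit (f (ϖ ^ j * y) * π) := fun h =>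
    pi_nonunit ϖE π hϖE hπ (isUnit_of_mul_isUnit_right h)
  constructor
  · intro h
    by_contra hs
    exact nonunit_add_nonunit (fun hh => hs ((isUnit_f_iff f ϖ ϖE hϖ hϖE hram).mp hh))
      hπn h
  · intro hs
    exact unit_add_nonunit (hs.map f) hπn

include hf hϖE hσσ hNr in
theorem nr_of_vp {z : O} {k : ℕ} (hϖ : Irreducible ϖ)
    (hram : ∃ w : O, IsUnit w ∧ ϖE ^ 2 = f ϖ * w)
    (h : Vp ϖE k z) : ∃ u : oˣ, Nr z = ϖ ^ k * u := by
  have hσz : Vp ϖE k (σ z) := vp_sigma ϖE σ hϖE hσσ h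
  have hz0 : z ≠ 0 := by
    obtain ⟨u, hu, rfl⟩ := h
    exact mul_ne_zero (pow_ne_zero k hϖE.ne_zero) hu.ne_zero
  have hσz0 : σ z ≠ 0 := by
    obtain ⟨u, hu, he⟩ := hσz
    rw [he]
    exact mul_ne_zero (pow_ne_zero k hϖE.ne_zero) hu.ne_zero
  have hNz0 : Nr z ≠ 0 := by
    intro hh
    have := hNr z
    rw [hh, map_zero] at this
    exact mul_ne_zero hz0 hσz0 this.symm
  rcases decomp ϖ hϖ (Nr z) with h0 | ⟨l, u, hu, hd⟩
  · exact absurd h0 hNz0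
  have hvf : Vp ϖE (2 * l) (f (Nr z)) := hd ▸ vp_f f ϖ ϖE hram hu l
  have hvm : Vp ϖE (k + k) (z * σ z) := vp_mul h hσz
  have heq : 2 * l = k + k := vp_unique hϖE hvf (hNr z ▸ hvm)
  have hlk : l = k := by omega
  exact ⟨hu.unit, by rw [hd, hlk, IsUnit.unit_spec]⟩

include hf hϖ hϖE hσσ hNr hram in
theorem vp_of_nr {z : O} {n : ℕ} (h : ∃ u : oˣ, Nr z = ϖ ^ n * u) : Vp ϖE n z := by
  obtain ⟨u, hu⟩ := h
  have hz0 : z ≠ 0 := by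
    rintro rfl
    have h1 : f (Nr 0) = 0 := by rw [hNr 0, zero_mul]
    have h2 : Nr (0 : O) = 0 := hf (by rw [h1, map_zero])
    rw [h2] at hu
    exact (mul_ne_zero (pow_ne_zero n hϖ.ne_zero) u.ne_zero) hu.symm
  obtain ⟨k, U, hU⟩ := IsDiscreteValuationRing.associated_pow_irreducible hz0 hϖE
  have hvz : Vp ϖE k z := ⟨↑U⁻¹, U⁻¹.isUnit, by
    rw [← hU, mul_assoc, Units.mul_inv, mul_one]⟩
  obtain ⟨v, hv⟩ := nr_of_vp hf hϖE hσσ hNr hϖ hram hvz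
  have : n = k := by
    refine IsDiscreteValuationRing.unit_mul_pow_congr_pow hϖ hϖ u v n k ?_
    rw [mul_comm (↑u : o), mul_comm (↑v : o), ← hu, ← hv]
  exact this ▸ hvz

include hf hϖ hϖE hram hπ hb in
theorem ordUnits_iff (hgen : ∀ z : O, ∃ x y : o, z = f x + f y * β) {j : ℕ} {z : O} :
    z ∈ ordUnits f ϖ β j ↔ z ∈ ordSet f ϖ β j ∧ IsUnit z := by
  constructor
  · rintro ⟨hz, w, hw, hzw⟩
    exact ⟨hz, IsUnit.of_mul_eq_one (a := z) w hzw⟩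
  · rintro ⟨hz, huz⟩
    refine ⟨hz, ?_⟩
    obtain ⟨s, y, rfl⟩ := (mem_ordSet_iff hb).mp hz
    have hsu : IsUnit s := (isUnit_scoord hϖ hϖE hram hπ).mp huz
    obtain ⟨si, hsi⟩ := isUnit_iff_exists_inv.mp hsu
    obtain ⟨w, hw⟩ := isUnit_iff_exists_inv.mp huz
    -- coordinates of w
    obtain ⟨x, y', hxy⟩ := hgen w
    have hw2 : w = f (x + y' * b) + f y' * π := by
      rw [hxy, hb]; simp only [map_add, map_mul]; ring
    set c : o := x + y' * b with hc
    obtain ⟨a, a2, hpi2⟩ := pisq hram hπ hb hgen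
    have hpi2' : π ^ 2 = f ϖ * f a + f ϖ * f a2 * π := by
      rw [hpi2]; simp only [map_mul]
    -- expand the product
    have hexp : (f s + f (ϖ ^ j * y) * π) * w =
        f (s * c + ϖ ^ j * y * y' * (ϖ * a)) +
          f (s * y' + ϖ ^ j * (y * c) + ϖ ^ j * y * y' * (ϖ * a2)) * π := by
      rw [hw2]
      simp only [map_add, map_mul, map_pow]
      linear_combination (f ϖ ^ j * f y * f y') * hpi2' 
    have hone : (1 : O) = f 1 + f (ϖ ^ j * 0) * π := by simp
    have := hexp.symm.trans (hw.trans hone)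
    obtain ⟨h1, h2⟩ := uniq f ϖ ϖE π hf hϖ hϖE hram hπ this
    -- h2 : s * y' + ϖ ^ j * (y * c) + ϖ ^ j * y * y' * (ϖ * a2) = ϖ ^ j * 0
    have hdvd : y' = ϖ ^ j * (si * (-(y * c) - y * y' * (ϖ * a2))) := by
      have h3 : s * y' = ϖ ^ j * (-(y * c) - y * y' * (ϖ * a2)) := by
        linear_combination h2
      calc y' = (s * si) * y' := by rw [hsi, one_mul]
      _ = si * (s * y') := by ring
      _ = ϖ ^ j * (si * (-(y * c) - y * y' * (ϖ * a2))) := by rw [h3]; ring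
    refine ⟨w, (mem_ordSet_iff hb).mpr ⟨c, si * (-(y * c) - y * y' * (ϖ * a2)), ?_⟩, hw⟩
    rw [hw2, ← hdvd]
  
end Main

end Stmt4Aux

end

open Stmt4Aux

/-- If `E/F` is a ramified quadratic field extension and `ϖ_E` a
uniformizer of `𝒪`, then for all `r, n ∈ ℕ`:
(i) `𝒪_r^{(n)} = ∅` if `n > 2r+1`, or if `0 ≤ n ≤ 2r` and `n` is odd;
(ii) `𝒪_r^{(0)} = 𝒪_r^×`;
(iii) `𝒪_r^{(n)} = ϖ^{n/2}·(𝒪_{r−n/2}^× ∖ 𝒪_{r−n/2+1}^×)` if `n` is even, `0 < n ≤ 2r`;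
(iv) `𝒪_r^{(2r+1)} = ϖ_E^{2r+1}𝒪^×`. -/
theorem stmt_4 {o O : Type*} [CommRing o] [IsDomain o] [IsDiscreteValuationRing o]
    [CommRing O] [IsDomain O] [IsDiscreteValuationRing O]
    (f : o →+* O) (hf : Function.Injective f)
    (ϖ : o) (hϖ : Irreducible ϖ)
    (β : O) (hβ : β ∉ Set.range f)
    (hgen : ∀ z : O, ∃ x y : o, z = f x + f y * β)
    (σ : O →+* O) (hσf : ∀ x : o, σ (f x) = f x) (hσσ : ∀ z : O, σ (σ z) = z)
    (Nr : O →* o) (hNr : ∀ z : O, f (Nr z) = z * σ z)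
    (hβunit : IsUnit (Nr β))
    (ϖE : O) (hϖE : Irreducible ϖE)
    (hram : Associated (f ϖ) (ϖE ^ 2))
    (r n : ℕ) :
    ((2 * r + 1 < n ∨ (n ≤ 2 * r ∧ Odd n)) → ordLayer f ϖ β Nr r n = ∅) ∧
    (ordLayer f ϖ β Nr r 0 = ordUnits f ϖ β r) ∧
    (Even n → 0 < n → n ≤ 2 * r →
      ordLayer f ϖ β Nr r n =
        (fun z => f (ϖ ^ (n / 2)) * z) ''
          (ordUnits f ϖ β (r - n / 2) \ ordUnits f ϖ β (r - n / 2 + 1))) ∧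
    (ordLayer f ϖ β Nr r (2 * r + 1) =
      (fun z => ϖE ^ (2 * r + 1) * z) '' {z : O | IsUnit z}) := by

  classical
  have hram' : ∃ w : O, IsUnit w ∧ ϖE ^ 2 = f ϖ * w := by
    obtain ⟨u, hu⟩ := hram; exact ⟨u, u.isUnit, hu.symm⟩
  have hβu : IsUnit β := by
    have h1 : IsUnit (f (Nr β)) := hβunit.map f
    rw [hNr] at h1
    exact isUnit_of_mul_isUnit_left h1
  -- find b and the uniformizer coordinate π = β - f b
  obtain ⟨x0, y0, hxy0⟩ := hgen ϖE
  have hy0 : IsUnit y0 := by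
    by_contra hy
    by_cases hx : IsUnit x0
    · have hn : ¬IsUnit (f y0 * β) := fun h =>
        hy ((isUnit_f_iff f ϖ ϖE hϖ hϖE hram').mp (isUnit_of_mul_isUnit_left h))
      exact hϖE.not_isUnit (hxy0 ▸ unit_add_nonunit (hx.map f) hn)
    · obtain ⟨x1, hx1⟩ := dvd_of_not_isUnit ϖ hϖ hx
      obtain ⟨y1, hy1⟩ := dvd_of_not_isUnit ϖ hϖ hy
      have ht : ϖE = f ϖ * (f x1 + f y1 * β) := by
        rw [hxy0, hx1, hy1]; simp only [map_mul]; ring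
      obtain ⟨w, hw, hw2⟩ := id hram'
      have hfϖ0 : f ϖ ≠ 0 := fun h => hϖ.ne_zero (hf (by rw [h, map_zero]))
      have hcan : w = f ϖ * (f x1 + f y1 * β) ^ 2 := by
        apply mul_left_cancel₀ hfϖ0
        rw [← hw2, ht]; ring
      exact f_nonunit f ϖ ϖE hϖE hram' (isUnit_of_mul_isUnit_left (hcan ▸ hw))
  obtain ⟨yu, rfl⟩ := hy0
  have hb : β = f (-(x0 * ↑yu⁻¹)) + (β - f (-(x0 * ↑yu⁻¹))) := by ring
  generalize hπdef : β - f (-(x0 * ↑yu⁻¹)) = π at hb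
  generalize hbdef : -(x0 * (↑yu⁻¹ : o)) = b at hb
  have hπ : ∃ e : O, IsUnit e ∧ π = ϖE * e := by
    refine ⟨f ↑yu⁻¹, (yu⁻¹.isUnit).map f, ?_⟩
    have key : (↑yu : o) * -(x0 * ↑yu⁻¹) = -x0 := by
      rw [mul_neg, mul_comm x0, ← mul_assoc, Units.mul_inv, one_mul]
    have h1 : f ↑yu * π = ϖE := by
      rw [← hπdef, mul_sub, ← map_mul, key, hxy0]
      simp only [map_neg]
      ring
    calc π = (f ↑yu⁻¹ * f ↑yu) * π := by rw [← map_mul, Units.inv_mul, map_one, one_mul]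
    _ = ϖE * f ↑yu⁻¹ := by rw [mul_assoc, mul_comm (f ↑yu⁻¹), h1, mul_comm]
  clear hπdef hbdef hxy0
  obtain ⟨pa, pa2, hpi2⟩ := pisq hram' hπ hb hgen
  have hmem : ∀ {j : ℕ} {z : O}, z ∈ ordSet f ϖ β j ↔
      ∃ s y : o, z = f s + f (ϖ ^ j * y) * π := fun {j z} => mem_ordSet_iff hb
  have bwd : ∀ (k : ℕ) (s y : o), ¬(ϖ ∣ s ∧ ϖ ∣ y) →
      Vp ϖE k (f s + f (ϖ ^ r * y) * π) →
      (f s + f (ϖ ^ r * y) * π) ∈ ordLayer f ϖ β Nr r k := by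
    intro k s y hnd hvp
    refine ⟨hmem.mpr ⟨s, y, rfl⟩, ?_, nr_of_vp hf hϖE hσσ hNr hϖ hram' hvp⟩
    intro hex
    exact hnd ((fdvd_iff hf hϖ hϖE hram' hπ hb).mp hex)
  have shape : ∀ (k : ℕ) (z : O), z ∈ ordLayer f ϖ β Nr r k →
      (k = 0 ∧ IsUnit z ∧ z ∈ ordSet f ϖ β r)
      ∨ (∃ l u w, IsUnit u ∧ IsUnit w ∧ k = 2 * l ∧ 1 ≤ l ∧ 2 * l < 2 * r + 1 ∧
          z = f (ϖ ^ l * u) + f (ϖ ^ r * w) * π)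
      ∨ (k = 2 * r + 1 ∧ Vp ϖE (2 * r + 1) z) := by
    rintro k z ⟨hz1, hz2, hz3⟩
    have hvp : Vp ϖE k z := vp_of_nr hf hϖ hϖE hram' hσσ hNr hz3
    obtain ⟨s, y, hzeq⟩ := hmem.mp hz1
    subst hzeq
    have hnd : ¬(ϖ ∣ s ∧ ϖ ∣ y) := fun hd =>
      hz2 ((fdvd_iff hf hϖ hϖE hram' hπ hb).mpr hd)
    rcases decomp ϖ hϖ s with rfl | ⟨l, u, hu, rfl⟩ <;>
      rcases decomp ϖ hϖ y with rfl | ⟨m, w, hw, rfl⟩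
    · -- s = 0, y = 0
      exfalso
      simp only [mul_zero, map_zero, zero_mul, add_zero] at hvp
      obtain ⟨u, hu, h0⟩ := hvp
      exact (mul_ne_zero (pow_ne_zero k hϖE.ne_zero) hu.ne_zero) h0.symm
    · -- s = 0, y = ϖ^m * w
      have hm : m = 0 := by
        by_contra hm0
        exact hnd ⟨dvd_zero ϖ, Dvd.dvd.mul_right (dvd_pow_self ϖ hm0) w⟩
      subst hm
      have hv2 : Vp ϖE (2 * r + 1) (f 0 + f (ϖ ^ r * (ϖ ^ 0 * w)) * π) := by
        simp only [pow_zero, one_mul, map_zero, zero_add]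
        exact vp_term f ϖ ϖE π hram' hπ hw r
      have hk := vp_unique hϖE hvp hv2
      exact Or.inr (Or.inr ⟨hk, hk ▸ hvp⟩)
    · -- s = ϖ^l * u, y = 0
      have hl : l = 0 := by
        by_contra hl0
        exact hnd ⟨Dvd.dvd.mul_right (dvd_pow_self ϖ hl0) u, dvd_zero ϖ⟩
      subst hl
      have hzu : IsUnit (f (ϖ ^ 0 * u) + f (ϖ ^ r * 0) * π) :=
        (isUnit_scoord hϖ hϖE hram' hπ).mpr (by simpa using hu)
      have hv0 : Vp ϖE 0 (f (ϖ ^ 0 * u) + f (ϖ ^ r * 0) * π) :=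
        ⟨_, hzu, by rw [pow_zero ϖE, one_mul]⟩
      exact Or.inl ⟨vp_unique hϖE hvp hv0, hzu, hz1⟩
    · -- s = ϖ^l * u, y = ϖ^m * w
      have harr : ϖ ^ r * (ϖ ^ m * w) = ϖ ^ (r + m) * w := by
        rw [← mul_assoc, ← pow_add]
      have hv1 : Vp ϖE (2 * l) (f (ϖ ^ l * u)) := vp_f f ϖ ϖE hram' hu l
      have hv2 : Vp ϖE (2 * (r + m) + 1) (f (ϖ ^ r * (ϖ ^ m * w)) * π) := by
        rw [harr]
        exact vp_term f ϖ ϖE π hram' hπ hw (r + m)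
      rcases lt_trichotomy (2 * l) (2 * (r + m) + 1) with hlt | heq | hgt
      · have hvz := vp_add hϖE hv1 hv2 hlt
        have hk := vp_unique hϖE hvp hvz
        rcases Nat.eq_zero_or_pos l with rfl | hl1
        · refine Or.inl ⟨by omega, ?_, hz1⟩
          exact (isUnit_scoord hϖ hϖE hram' hπ).mpr (by simpa using hu)
        · have hm : m = 0 := by
            by_contra hm0
            exact hnd ⟨Dvd.dvd.mul_right (dvd_pow_self ϖ (by omega)) u,
              Dvd.dvd.mul_right (dvd_pow_self ϖ hm0) w⟩
          subst hm
          refine Or.inr (Or.inl ⟨l, u, w, hu, hw, hk, hl1, by omega, ?_⟩)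
          simp only [pow_zero, one_mul]
      · omega
      · have hvz := vp_add hϖE hv2 hv1 hgt
        rw [add_comm (f (ϖ ^ r * (ϖ ^ m * w)) * π) (f (ϖ ^ l * u))] at hvz
        have hk := vp_unique hϖE hvp hvz
        have hm : m = 0 := by
          by_contra hm0
          exact hnd ⟨Dvd.dvd.mul_right (dvd_pow_self ϖ (by omega)) u,
            Dvd.dvd.mul_right (dvd_pow_self ϖ hm0) w⟩
        subst hm
        exact Or.inr (Or.inr ⟨by omega, by rw [show 2 * r + 1 = k by omega]; exact hvp⟩)
  refine ⟨?_, ?_, ?_, ?_⟩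
  · -- part (i)
    rintro hcond
    rw [Set.eq_empty_iff_forall_notMem]
    intro z hz
    rcases hcond with hgt | ⟨hle, hodd⟩ <;>
      [skip; rw [Nat.odd_iff] at hodd] <;>
      rcases shape n z hz with ⟨h0, _⟩ | ⟨l, u, w, _, _, h2, h3, h4, _⟩ | ⟨h5, _⟩ <;>
      omega
  · -- part (ii)
    ext z
    constructor
    · intro hz
      rcases shape 0 z hz with ⟨_, hu, hm⟩ | ⟨l, u, w, _, _, h2, h3, _, _⟩ | ⟨h5, _⟩
      · exact (ordUnits_iff hf hϖ hϖE hram' hπ hb hgen).mpr ⟨hm, hu⟩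
      · omega
      · omega
    · intro hz
      obtain ⟨hm, hu⟩ := (ordUnits_iff hf hϖ hϖE hram' hπ hb hgen).mp hz
      refine ⟨hm, ?_, ?_⟩
      · rintro ⟨t, ht, he⟩
        exact f_nonunit f ϖ ϖE hϖE hram' (isUnit_of_mul_isUnit_left (he ▸ hu))
      · exact nr_of_vp hf hϖE hσσ hNr hϖ hram'
          ⟨z, hu, by rw [pow_zero, one_mul]⟩
  · -- part (iii)
    intro hev hpos hle
    rw [Nat.even_iff] at hev
    have hpow : ϖ ^ (n / 2) * ϖ ^ (r - n / 2) = ϖ ^ r := by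
      rw [← pow_add]; congr 1; omega
    ext z
    simp only [Set.mem_image, Set.mem_diff]
    constructor
    · intro hz
      rcases shape n z hz with ⟨h0, _⟩ | ⟨l, u, w, hu, hw, h2, h3, h4, h5⟩ | ⟨h5, _⟩
      · omega
      · have hlm : l = n / 2 := by omega
        subst hlm
        refine ⟨f u + f (ϖ ^ (r - n / 2) * w) * π, ⟨?_, ?_⟩, ?_⟩
        · exact (ordUnits_iff hf hϖ hϖE hram' hπ hb hgen).mpr
            ⟨hmem.mpr ⟨u, w, rfl⟩, (isUnit_scoord hϖ hϖE hram' hπ).mpr hu⟩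
        · intro hW
          obtain ⟨hWm, _⟩ := (ordUnits_iff hf hϖ hϖE hram' hπ hb hgen).mp hW
          obtain ⟨s', y', hWe⟩ := hmem.mp hWm
          obtain ⟨hs', hy'⟩ := uniq f ϖ ϖE π hf hϖ hϖE hram' hπ hWe
          have : w = ϖ * y' := by
            apply mul_left_cancel₀ (pow_ne_zero (r - n / 2) hϖ.ne_zero)
            rw [hy', pow_succ]; ring
          exact not_dvd_unit ϖ hϖ hw ⟨y', this⟩
        · rw [h5, ← hpow]
          simp only [map_mul, map_pow]
          ring
      · omega
    · rintro ⟨W, ⟨hWin, hWout⟩, hWz⟩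
      obtain ⟨hWm, hWu⟩ := (ordUnits_iff hf hϖ hϖE hram' hπ hb hgen).mp hWin
      obtain ⟨s, y, rfl⟩ := hmem.mp hWm
      have hsu : IsUnit s := (isUnit_scoord hϖ hϖE hram' hπ).mp hWu
      have hyu : IsUnit y := by
        by_contra hy
        obtain ⟨y2, rfl⟩ := dvd_of_not_isUnit ϖ hϖ hy
        refine hWout ((ordUnits_iff hf hϖ hϖE hram' hπ hb hgen).mpr
          ⟨hmem.mpr ⟨s, y2, ?_⟩, hWu⟩)
        rw [pow_succ]; ring_nf
      have hE : f (ϖ ^ (n / 2)) * (f s + f (ϖ ^ (r - n / 2) * y) * π) =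
          f (ϖ ^ (n / 2) * s) + f (ϖ ^ r * y) * π := by
        rw [← hpow]
        simp only [map_mul, map_pow]
        ring
      rw [← hWz, hE]
      apply bwd n
      · rintro ⟨_, hdy⟩
        exact not_dvd_unit ϖ hϖ hyu hdy
      · have hv1 : Vp ϖE (2 * (n / 2)) (f (ϖ ^ (n / 2) * s)) :=
          vp_f f ϖ ϖE hram' hsu (n / 2)
        have hv2 : Vp ϖE (2 * r + 1) (f (ϖ ^ r * y) * π) :=
          vp_term f ϖ ϖE π hram' hπ hyu r
        have := vp_add hϖE hv1 hv2 (by omega)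
        rwa [show 2 * (n / 2) = n by omega] at this
  · -- part (iv)
    ext z
    simp only [Set.mem_image, Set.mem_setOf_eq]
    constructor
    · intro hz
      rcases shape (2 * r + 1) z hz with ⟨h0, _⟩ | ⟨l, u, w, _, _, h2, h3, h4, _⟩ | ⟨_, hvp⟩
      · omega
      · omega
      · obtain ⟨e, he, hze⟩ := hvp
        exact ⟨e, he, hze.symm⟩
    · rintro ⟨e, he, rfl⟩
      obtain ⟨w, hwu, hw2⟩ := id hram'
      obtain ⟨e1, he1, hπe⟩ := id hπ
      obtain ⟨e1i, he1i⟩ := isUnit_iff_exists_inv.mp he1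
      have hϖEeq : ϖE = π * e1i := by rw [hπe, mul_assoc, he1i, mul_one]
      have hzeq : ϖE ^ (2 * r + 1) * e = f (ϖ ^ r) * π * (w ^ r * e1i * e) := by
        rw [pow_succ, pow_mul, hw2, mul_pow, hϖEeq, map_pow]
        ring
      obtain ⟨x2, y2, hxy2⟩ := hgen (w ^ r * e1i * e)
      have hc2 : w ^ r * e1i * e = f (x2 + y2 * b) + f y2 * π := by
        rw [hxy2, hb]; simp only [map_add, map_mul]; ring
      have hcu : IsUnit (w ^ r * e1i * e) :=
        ((hwu.pow r).mul (IsUnit.of_mul_eq_one _ (by rw [mul_comm] at he1i; exact he1i))).mul he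
      have hc1u : IsUnit (x2 + y2 * b) := by
        refine (isUnit_scoord (j := 0) (s := x2 + y2 * b) (y := y2) hϖ hϖE hram' hπ).mp ?_
        rw [pow_zero, one_mul, ← hc2]
        exact hcu
      have hpi2' : π ^ 2 = f ϖ * f pa + f ϖ * f pa2 * π := by
        rw [hpi2]; simp only [map_mul]
      have hzeq2 : ϖE ^ (2 * r + 1) * e =
          f (ϖ ^ (r + 1) * (y2 * pa)) +
            f (ϖ ^ r * ((x2 + y2 * b) + ϖ * (y2 * pa2))) * π := by
        rw [hzeq, hc2]
        simp only [map_add, map_mul, map_pow]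
        linear_combination (f ϖ ^ r * f y2) * hpi2'
      rw [hzeq2]
      apply bwd (2 * r + 1)
      · rintro ⟨_, hdy⟩
        have hdc1 : ϖ ∣ x2 + y2 * b := by
          obtain ⟨t, ht⟩ := hdy
          exact ⟨t - y2 * pa2, by rw [mul_sub, ← ht]; ring⟩
        exact not_dvd_unit ϖ hϖ hc1u hdc1
      · rw [← hzeq2]
        exact ⟨e, he, rfl⟩
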